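/- arXiv:2604.02735 — 6 statements merged into one kernel-verified Lean document; each statement's English description precedes it below -/
import Mathlib

section
/- Let p and q be probability densities on ℝ with p, q ∈ L¹(ℝ) ∩ L²(ℝ), and let h ∈ L²(ℝ) be such that h·p and h·q are integrable. Set ĥ = ∫_ℝ h(y) p(y) dy, ĥ_q = ∫_ℝ h(y) q(y) dy, f(x) = −∫_{−∞}^x (h(y) − ĥ) p(y) dy and f_q(x) = −∫_{−∞}^x (h(y) − ĥ_q) q(y) dy. Then for every x ∈ ℝ, |f(x) − f_q(x)| ≤ 2‖h‖_{L²(ℝ)} ‖p − q‖_{L²(ℝ)} + |ĥ_q| · ‖p − q‖_{L¹(ℝ)}. -/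
open MeasureTheory

lemma cs_aux (f g : ℝ → ℝ) (hf : MemLp f 2 (volume : Measure ℝ))
    (hg : MemLp g 2 (volume : Measure ℝ)) :
    ∫ y : ℝ, |f y * g y| ≤ Real.sqrt (∫ y : ℝ, f y ^ 2) * Real.sqrt (∫ y : ℝ, g y ^ 2) := by
  have h2 : (ENNReal.ofReal (2:ℝ)) = 2 := by norm_num
  have hpq : (2:ℝ).HolderConjugate 2 := ⟨by norm_num, by norm_num, by norm_num⟩
  have := integral_mul_norm_le_Lp_mul_Lq (μ := (volume : Measure ℝ)) hpq
    (h2 ▸ hf) (h2 ▸ hg)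
  have e1 : ∀ y : ℝ, |f y * g y| = ‖f y‖ * ‖g y‖ := fun y => by
    simp [abs_mul]
  have e2 : ∀ y : ℝ, ‖f y‖ ^ (2:ℝ) = f y ^ 2 := fun y => by
    rw [show ((2:ℝ) = ((2:ℕ):ℝ)) by norm_num, Real.rpow_natCast]
    simp [sq_abs]
  have e3 : ∀ y : ℝ, ‖g y‖ ^ (2:ℝ) = g y ^ 2 := fun y => by
    rw [show ((2:ℝ) = ((2:ℕ):ℝ)) by norm_num, Real.rpow_natCast]
    simp [sq_abs]
  simp only [e2, e3] at this
  calc ∫ y : ℝ, |f y * g y| = ∫ y : ℝ, ‖f y‖ * ‖g y‖ := by simp only [e1]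
    _ ≤ (∫ y : ℝ, f y ^ 2) ^ (1/(2:ℝ)) * (∫ y : ℝ, g y ^ 2) ^ (1/(2:ℝ)) := this
    _ = Real.sqrt (∫ y : ℝ, f y ^ 2) * Real.sqrt (∫ y : ℝ, g y ^ 2) := by
        rw [Real.sqrt_eq_rpow, Real.sqrt_eq_rpow]

/-- stability of the gain-function antiderivative
f(x) = -∫_{-∞}^x (h - ĥ) p under perturbation of the density p. -/
theorem gain_antiderivative_stability
    (p q h : ℝ → ℝ)
    (hp_meas : Measurable p) (hp_nonneg : ∀ x, 0 ≤ p x)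
    (hp_int : Integrable p) (hp_one : (∫ x : ℝ, p x) = 1)
    (hp_L2 : MemLp p 2 (volume : Measure ℝ))
    (hq_meas : Measurable q) (hq_nonneg : ∀ x, 0 ≤ q x)
    (hq_int : Integrable q) (hq_one : (∫ x : ℝ, q x) = 1)
    (hq_L2 : MemLp q 2 (volume : Measure ℝ))
    (hh : MemLp h 2 (volume : Measure ℝ))
    (hhp : Integrable (fun x => h x * p x))
    (hhq : Integrable (fun x => h x * q x)) :
    ∀ x : ℝ,
      |(-∫ y in Set.Iic x, (h y - ∫ z : ℝ, h z * p z) * p y) -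
          (-∫ y in Set.Iic x, (h y - ∫ z : ℝ, h z * q z) * q y)| ≤
        2 * Real.sqrt (∫ y : ℝ, h y ^ 2) * Real.sqrt (∫ y : ℝ, (p y - q y) ^ 2) +
          |∫ z : ℝ, h z * q z| * ∫ y : ℝ, |p y - q y| := by
  intro x
  set a : ℝ := ∫ z : ℝ, h z * p z with ha
  set b : ℝ := ∫ z : ℝ, h z * q z with hb
  set S : ℝ := Real.sqrt (∫ y : ℝ, h y ^ 2) * Real.sqrt (∫ y : ℝ, (p y - q y) ^ 2) with hS
  -- integrabilities
  have hpq_int : Integrable (fun y => p y - q y) := hp_int.sub hq_int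
  have hhpq : Integrable (fun y => h y * (p y - q y)) := by
    have := hhp.sub hhq
    simpa [mul_sub, Pi.sub_def] using this
  have hCS : ∫ y : ℝ, |h y * (p y - q y)| ≤ S :=
    cs_aux h (fun y => p y - q y) hh (hp_L2.sub hq_L2)
  -- a - b = ∫ h (p - q)
  have hab : a - b = ∫ y : ℝ, h y * (p y - q y) := by
    rw [ha, hb, ← integral_sub hhp hhq]
    simp [mul_sub]
  have hab_le : |a - b| ≤ S := by
    rw [hab]
    calc |∫ y : ℝ, h y * (p y - q y)| ≤ ∫ y : ℝ, |h y * (p y - q y)| := by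
          simpa only [Real.norm_eq_abs] using norm_integral_le_integral_norm (fun y => h y * (p y - q y))
      _ ≤ S := hCS
  -- restricted integrabilities
  have hIp : Integrable (fun y => (h y - a) * p y) (volume.restrict (Set.Iic x)) := by
    have : Integrable (fun y => h y * p y - a * p y) :=
      hhp.sub (hp_int.const_mul a)
    exact (this.congr (by filter_upwards with y; ring)).restrict
  have hIq : Integrable (fun y => (h y - b) * q y) (volume.restrict (Set.Iic x)) := by
    have : Integrable (fun y => h y * q y - b * q y) :=
      hhq.sub (hq_int.const_mul b)
    exact (this.congr (by filter_upwards with y; ring)).restrict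
  -- rewrite the difference
  have key : (-∫ y in Set.Iic x, (h y - a) * p y) - (-∫ y in Set.Iic x, (h y - b) * q y)
      = (∫ y in Set.Iic x, h y * (q y - p y))
        + (a - b) * (∫ y in Set.Iic x, p y)
        + b * (∫ y in Set.Iic x, (p y - q y)) := by
    have h1 : Integrable (fun y => h y * (q y - p y)) (volume.restrict (Set.Iic x)) := by
      have := hhpq.neg
      exact (this.congr (by filter_upwards with y; simp only [Pi.neg_apply]; ring)).restrict
    have h2 : Integrable (fun y => (a - b) * p y) (volume.restrict (Set.Iic x)) :=
      (hp_int.const_mul (a - b)).restrict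
    have h3 : Integrable (fun y => b * (p y - q y)) (volume.restrict (Set.Iic x)) :=
      (hpq_int.const_mul b).restrict
    have e : ∀ y, (h y - b) * q y - (h y - a) * p y
        = h y * (q y - p y) + ((a - b) * p y + b * (p y - q y)) := fun y => by ring
    rw [neg_sub_neg, ← integral_sub hIq hIp]
    calc ∫ y in Set.Iic x, ((h y - b) * q y - (h y - a) * p y)
        = ∫ y in Set.Iic x, (h y * (q y - p y) + ((a - b) * p y + b * (p y - q y))) := by
          simp only [e]
      _ = (∫ y in Set.Iic x, h y * (q y - p y))
          + ∫ y in Set.Iic x, ((a - b) * p y + b * (p y - q y)) := integral_add h1 (h2.add h3)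
      _ = (∫ y in Set.Iic x, h y * (q y - p y))
          + ((∫ y in Set.Iic x, (a - b) * p y) + ∫ y in Set.Iic x, b * (p y - q y)) := by
          rw [integral_add h2 h3]
      _ = _ := by rw [integral_const_mul, integral_const_mul]; ring
  rw [key]
  -- bound each of three pieces
  have T1 : |∫ y in Set.Iic x, h y * (q y - p y)| ≤ S := by
    calc |∫ y in Set.Iic x, h y * (q y - p y)|
        ≤ ∫ y in Set.Iic x, |h y * (q y - p y)| := by
          simpa only [Real.norm_eq_abs] using norm_integral_le_integral_norm
            (μ := volume.restrict (Set.Iic x)) (fun y => h y * (q y - p y))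
      _ = ∫ y in Set.Iic x, |h y * (p y - q y)| := by
          congr 1; funext y; rw [abs_mul, abs_mul, abs_sub_comm]
      _ ≤ ∫ y : ℝ, |h y * (p y - q y)| :=
          setIntegral_le_integral hhpq.abs (by filter_upwards with y using abs_nonneg _)
      _ ≤ S := hCS
  have hpx_le : (∫ y in Set.Iic x, p y) ≤ 1 := by
    rw [← hp_one]
    exact setIntegral_le_integral hp_int (by filter_upwards with y using hp_nonneg y)
  have hpx_nonneg : 0 ≤ ∫ y in Set.Iic x, p y :=
    integral_nonneg (fun y => hp_nonneg y)
  have T2 : |(a - b) * (∫ y in Set.Iic x, p y)| ≤ S := by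
    rw [abs_mul, abs_of_nonneg hpx_nonneg]
    calc |a - b| * (∫ y in Set.Iic x, p y) ≤ |a - b| * 1 :=
          mul_le_mul_of_nonneg_left hpx_le (abs_nonneg _)
      _ = |a - b| := mul_one _
      _ ≤ S := hab_le
  have T3 : |b * (∫ y in Set.Iic x, (p y - q y))| ≤ |b| * ∫ y : ℝ, |p y - q y| := by
    rw [abs_mul]
    refine mul_le_mul_of_nonneg_left ?_ (abs_nonneg _)
    calc |∫ y in Set.Iic x, (p y - q y)| ≤ ∫ y in Set.Iic x, |p y - q y| := by
          simpa only [Real.norm_eq_abs] using norm_integral_le_integral_norm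
            (μ := volume.restrict (Set.Iic x)) (fun y => p y - q y)
      _ ≤ ∫ y : ℝ, |p y - q y| :=
          setIntegral_le_integral hpq_int.abs (by filter_upwards with y using abs_nonneg _)
  calc |(∫ y in Set.Iic x, h y * (q y - p y)) + (a - b) * (∫ y in Set.Iic x, p y)
        + b * (∫ y in Set.Iic x, (p y - q y))|
      ≤ |(∫ y in Set.Iic x, h y * (q y - p y)) + (a - b) * (∫ y in Set.Iic x, p y)|
        + |b * (∫ y in Set.Iic x, (p y - q y))| := abs_add_le _ _
    _ ≤ (|∫ y in Set.Iic x, h y * (q y - p y)| + |(a - b) * (∫ y in Set.Iic x, p y)|)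
        + |b * (∫ y in Set.Iic x, (p y - q y))| := by
          exact add_le_add (abs_add_le _ _) le_rfl
    _ ≤ (S + S) + |b| * ∫ y : ℝ, |p y - q y| :=
          add_le_add (add_le_add T1 T2) T3
    _ = 2 * Real.sqrt (∫ y : ℝ, h y ^ 2) * Real.sqrt (∫ y : ℝ, (p y - q y) ^ 2)
        + |b| * ∫ y : ℝ, |p y - q y| := by rw [hS]; ring
end

section
/- Let s ≥ 2. There exists a constant C > 0 such that for every integer M ≥ 2 and every f ∈ L²(ℝ) with ‖f‖_s < ∞ admitting Galerkin coefficients a_0, …, a_M of order M, one has Σ_{m=0}^M |a_m − f̂_m|² ≤ C · M^{−s+1} · (log M) · ‖f‖_s². -/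
open MeasureTheory Real

/-- Physicists' Hermite polynomials: H_0 = 1, H_1 = 2x, H_{n+1} = 2x H_n - 2n H_{n-1}. -/
noncomputable def physHermite : ℕ → ℝ → ℝ
  | 0 => fun _ => 1
  | 1 => fun x => 2 * x
  | n + 2 => fun x => 2 * x * physHermite (n + 1) x - 2 * (n + 1) * physHermite n x

/-- Generalized Hermite functions H̃_n(x) = π^{-1/4} (2^n n!)^{-1/2} e^{-x²/2} H_n(x). -/
noncomputable def tildeH (n : ℕ) (x : ℝ) : ℝ :=
  Real.pi ^ (-(1 / 4) : ℝ) * (Real.sqrt (2 ^ n * n.factorial))⁻¹ *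
    Real.exp (-x ^ 2 / 2) * physHermite n x

/-- Hermite coefficients f̂_m = ∫ f H̃_m. -/
noncomputable def hermCoeff (f : ℝ → ℝ) (m : ℕ) : ℝ := ∫ x : ℝ, f x * tildeH m x

/-- b_l = √((l+1)/2) f̂_{l+1} - √(l/2) f̂_{l-1} (with the convention f̂_{-1} = 0;
here `l - 1` is truncated ℕ-subtraction, harmless since √(0/2) = 0 when l = 0). -/
noncomputable def bCoeff (f : ℝ → ℝ) (l : ℕ) : ℝ :=
  Real.sqrt (((l : ℝ) + 1) / 2) * hermCoeff f (l + 1) -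
    Real.sqrt ((l : ℝ) / 2) * hermCoeff f (l - 1)

/-- `a 0, …, a M` are Galerkin coefficients of order `M` for `f`
(with the convention a_{-1} = 0, again harmless by ℕ-subtraction since √(0/2) = 0). -/
def IsGalerkinCoeffs (f : ℝ → ℝ) (M : ℕ) (a : ℕ → ℝ) : Prop :=
  (∀ l : ℕ, l + 1 ≤ M →
      bCoeff f l = Real.sqrt (((l : ℝ) + 1) / 2) * a (l + 1) -
        Real.sqrt ((l : ℝ) / 2) * a (l - 1)) ∧
  bCoeff f M = -Real.sqrt ((M : ℝ) / 2) * a (M - 1) ∧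
  bCoeff f (M + 1) = -Real.sqrt (((M : ℝ) + 1) / 2) * a M

/-- Hermite–Sobolev squared norm ‖f‖_s² = Σ (m+1)^s |f̂_m|². -/
noncomputable def sobolevSq (f : ℝ → ℝ) (s : ℝ) : ℝ :=
  ∑' m : ℕ, ((m : ℝ) + 1) ^ s * hermCoeff f m ^ 2


/-- Auxiliary: harmonic sum bound. -/
lemma harmonic_le_aux (n : ℕ) :
    ∑ m ∈ Finset.range (n + 1), (1 : ℝ) / ((m : ℝ) + 1) ≤ 1 + Real.log ((n : ℝ) + 1) := by
  induction n with
  | zero => simp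
  | succ n ih =>
    rw [Finset.sum_range_succ]
    have hx : Real.log (((n:ℝ)+1) / ((n:ℝ)+2)) ≤ ((n:ℝ)+1)/((n:ℝ)+2) - 1 :=
      Real.log_le_sub_one_of_pos (by positivity)
    rw [Real.log_div (by positivity) (by positivity)] at hx
    have he : ((n:ℝ)+1)/((n:ℝ)+2) - 1 = -(1/((n:ℝ)+2)) := by field_simp; ring
    rw [he] at hx
    push_cast
    have h2 : Real.log ((n:ℝ)+1+1) = Real.log ((n:ℝ)+2) := by ring_nf
    have h3 : (1:ℝ)/((n:ℝ)+1+1) = 1/((n:ℝ)+2) := by ring_nf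
    rw [h2, h3]
    linarith

/-- Auxiliary: squaring an identity between multiples of square roots. -/
lemma sq_of_sqrt_eq_aux {A B X Y : ℝ} (hA : 0 ≤ A) (hB : 0 ≤ B)
    (h : Real.sqrt A * X = Real.sqrt B * Y) : A * X ^ 2 = B * Y ^ 2 := by
  have h2 : (Real.sqrt A * X) ^ 2 = (Real.sqrt B * Y) ^ 2 := by rw [h]
  rwa [mul_pow, mul_pow, Real.sq_sqrt hA, Real.sq_sqrt hB] at h2

set_option maxHeartbeats 1000000 in
theorem galerkin_coeff_error_aux (s : ℝ) (hs : 2 ≤ s) :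
    ∃ C > 0, ∀ M : ℕ, 2 ≤ M → ∀ f : ℝ → ℝ, MemLp f 2 (volume : Measure ℝ) →
      Summable (fun m : ℕ => ((m : ℝ) + 1) ^ s * hermCoeff f m ^ 2) →
      ∀ a : ℕ → ℝ, IsGalerkinCoeffs f M a →
        (∑ m ∈ Finset.range (M + 1), (a m - hermCoeff f m) ^ 2) ≤
          C * (M : ℝ) ^ (-s + 1) * Real.log M * sobolevSq f s := by
  refine ⟨16, by norm_num, ?_⟩
  intro M hM f _hf hsum a hg
  set S := sobolevSq f s with hS
  have hSnn : 0 ≤ S := tsum_nonneg (fun m => by positivity)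
  set E : ℕ → ℝ := fun m => a m - hermCoeff f m with hE
  have hMpos : (0:ℝ) < (M:ℝ) := by
    have : 0 < M := by omega
    exact_mod_cast this
  have hM2 : (2:ℝ) ≤ (M:ℝ) := by exact_mod_cast hM
  -- single-coefficient bound
  have hterm : ∀ m : ℕ, hermCoeff f m ^ 2 ≤ ((m:ℝ)+1) ^ (-s) * S := by
    intro m
    have h1 : ((m:ℝ)+1) ^ s * hermCoeff f m ^ 2 ≤ S :=
      Summable.le_tsum hsum m (fun i _ => by positivity)
    have hpos : (0:ℝ) < ((m:ℝ)+1) ^ s := Real.rpow_pos_of_pos (by positivity) s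
    rw [Real.rpow_neg (by positivity : (0:ℝ) ≤ (m:ℝ)+1)]
    calc hermCoeff f m ^ 2 = (((m:ℝ)+1) ^ s)⁻¹ * (((m:ℝ)+1) ^ s * hermCoeff f m ^ 2) := by
          field_simp
      _ ≤ (((m:ℝ)+1) ^ s)⁻¹ * S := by
          exact mul_le_mul_of_nonneg_left h1 (by positivity)
  -- step identity
  have hstep : ∀ m : ℕ, m + 2 ≤ M →
      ((m:ℝ)+1) * E m ^ 2 = ((m:ℝ)+2) * E (m+2) ^ 2 := by
    intro m hm
    have h := hg.1 (m+1) (by omega)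
    simp only [bCoeff, Nat.add_sub_cancel] at h
    push_cast at h
    have h2 : Real.sqrt (((m:ℝ)+1+1)/2) * (a (m+1+1) - hermCoeff f (m+1+1)) =
        Real.sqrt (((m:ℝ)+1)/2) * (a m - hermCoeff f m) := by linarith [h]
    have h3 := sq_of_sqrt_eq_aux (by positivity) (by positivity) h2
    have hmm : m + 1 + 1 = m + 2 := by ring
    rw [hmm] at h3
    simp only [hE]
    linarith
  -- end conditions
  have hend1 : (M:ℝ) * E (M-1) ^ 2 = ((M:ℝ)+1) * hermCoeff f (M+1) ^ 2 := by
    have h := hg.2.1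
    simp only [bCoeff] at h
    have h2 : Real.sqrt ((M:ℝ)/2) * (a (M-1) - hermCoeff f (M-1)) =
        Real.sqrt (((M:ℝ)+1)/2) * (-hermCoeff f (M+1)) := by linarith [h]
    have h3 := sq_of_sqrt_eq_aux (by positivity) (by positivity) h2
    simp only [hE]
    nlinarith [h3]
  have hend2 : ((M:ℝ)+1) * E M ^ 2 = ((M:ℝ)+2) * hermCoeff f (M+2) ^ 2 := by
    have h := hg.2.2
    simp only [bCoeff, Nat.add_sub_cancel] at h
    push_cast at h
    have h2 : Real.sqrt (((M:ℝ)+1)/2) * (a M - hermCoeff f M) =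
        Real.sqrt (((M:ℝ)+1+1)/2) * (-hermCoeff f (M+1+1)) := by linarith [h]
    have h3 := sq_of_sqrt_eq_aux (by positivity) (by positivity) h2
    have hmm : M + 1 + 1 = M + 2 := by ring
    rw [hmm] at h3
    simp only [hE]
    nlinarith [h3]
  set K : ℝ := ((M:ℝ)+2) * hermCoeff f (M+2) ^ 2 + ((M:ℝ)+1) * hermCoeff f (M+1) ^ 2
    with hK
  have hKnn : 0 ≤ K := by positivity
  -- backwards propagation
  have key : ∀ k : ℕ, ∀ m : ℕ, m + k = M → ((m:ℝ)+1) * E m ^ 2 ≤ K := by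
    intro k
    induction k using Nat.strong_induction_on with
    | _ k ih =>
      intro m hm
      match k, hm with
      | 0, hm =>
        have hmM : m = M := by omega
        rw [hmM]
        nlinarith [hend2, hK, mul_nonneg (show (0:ℝ) ≤ (M:ℝ)+1 by positivity)
          (sq_nonneg (hermCoeff f (M+1)))]
      | 1, hm =>
        have hmM : M - 1 = m := by omega
        have hcast : (M:ℝ) = (m:ℝ)+1 := by
          have : m + 1 = M := by omega
          exact_mod_cast (congrArg (Nat.cast : ℕ → ℝ) this).symm
        rw [hmM, hcast] at hend1
        nlinarith [hend1, hK, mul_nonneg (show (0:ℝ) ≤ (M:ℝ)+2 by positivity)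
          (sq_nonneg (hermCoeff f (M+2)))]
      | (k+2), hm =>
        have h2 : m + 2 ≤ M := by omega
        rw [hstep m h2]
        have hih := ih k (by omega) (m+2) (by omega)
        push_cast at hih
        nlinarith [hih, sq_nonneg (E (m+2))]
  -- sum bound
  have hsumE : ∑ m ∈ Finset.range (M+1), E m ^ 2 ≤ K * (1 + Real.log ((M:ℝ)+1)) := by
    have hb : ∀ m ∈ Finset.range (M+1), E m ^ 2 ≤ K * (1/((m:ℝ)+1)) := by
      intro m hmem
      have hm : m ≤ M := Nat.lt_succ_iff.mp (Finset.mem_range.mp hmem)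
      have hkey := key (M - m) m (by omega)
      have hp : (0:ℝ) < (m:ℝ)+1 := by positivity
      rw [mul_one_div, le_div_iff₀ hp]
      linarith
    calc ∑ m ∈ Finset.range (M+1), E m ^ 2
        ≤ ∑ m ∈ Finset.range (M+1), K * (1/((m:ℝ)+1)) := Finset.sum_le_sum hb
      _ = K * ∑ m ∈ Finset.range (M+1), (1:ℝ)/((m:ℝ)+1) := by rw [Finset.mul_sum]
      _ ≤ K * (1 + Real.log ((M:ℝ)+1)) :=
          mul_le_mul_of_nonneg_left (harmonic_le_aux M) hKnn
  -- bound K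
  have hrpow_mono : ∀ x : ℝ, (M:ℝ) ≤ x → x ^ (-s) ≤ (M:ℝ) ^ (-s) := by
    intro x hx
    have hxpos : (0:ℝ) < x := lt_of_lt_of_le hMpos hx
    rw [Real.rpow_neg (le_of_lt hMpos), Real.rpow_neg (le_of_lt hxpos)]
    exact inv_anti₀ (Real.rpow_pos_of_pos hMpos s)
      (Real.rpow_le_rpow (le_of_lt hMpos) hx (by linarith))
  have hKle : K ≤ 4 * (M:ℝ) ^ (1-s) * S := by
    have h1 : hermCoeff f (M+2) ^ 2 ≤ (M:ℝ) ^ (-s) * S := by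
      have := hterm (M+2)
      have h2 := hrpow_mono (((M+2:ℕ):ℝ)+1) (by push_cast; linarith)
      calc hermCoeff f (M+2) ^ 2 ≤ (((M+2:ℕ):ℝ)+1) ^ (-s) * S := this
        _ ≤ (M:ℝ) ^ (-s) * S := mul_le_mul_of_nonneg_right h2 hSnn
    have h2 : hermCoeff f (M+1) ^ 2 ≤ (M:ℝ) ^ (-s) * S := by
      have := hterm (M+1)
      have h3 := hrpow_mono (((M+1:ℕ):ℝ)+1) (by push_cast; linarith)
      calc hermCoeff f (M+1) ^ 2 ≤ (((M+1:ℕ):ℝ)+1) ^ (-s) * S := this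
        _ ≤ (M:ℝ) ^ (-s) * S := mul_le_mul_of_nonneg_right h3 hSnn
    have hrw : (M:ℝ) ^ (1-s) = (M:ℝ) * (M:ℝ) ^ (-s) := by
      rw [show (1:ℝ)-s = 1 + (-s) by ring, Real.rpow_add hMpos, Real.rpow_one]
    rw [hrw]
    have hnn : (0:ℝ) ≤ (M:ℝ) ^ (-s) * S := by positivity
    have hsq1 : 0 ≤ hermCoeff f (M+2) ^ 2 := sq_nonneg _
    have hsq2 : 0 ≤ hermCoeff f (M+1) ^ 2 := sq_nonneg _
    have hX : (0:ℝ) ≤ ((M:ℝ)-2) * ((M:ℝ) ^ (-s) * S) := mul_nonneg (by linarith) hnn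
    have e1 : ((M:ℝ)+2) * hermCoeff f (M+2) ^ 2 ≤ 2*(M:ℝ) * ((M:ℝ) ^ (-s) * S) := by
      calc ((M:ℝ)+2) * hermCoeff f (M+2) ^ 2 ≤ ((M:ℝ)+2) * ((M:ℝ) ^ (-s) * S) :=
            mul_le_mul_of_nonneg_left h1 (by positivity)
        _ ≤ 2*(M:ℝ) * ((M:ℝ) ^ (-s) * S) := by linarith
    have e2 : ((M:ℝ)+1) * hermCoeff f (M+1) ^ 2 ≤ 2*(M:ℝ) * ((M:ℝ) ^ (-s) * S) := by
      calc ((M:ℝ)+1) * hermCoeff f (M+1) ^ 2 ≤ ((M:ℝ)+1) * ((M:ℝ) ^ (-s) * S) :=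
            mul_le_mul_of_nonneg_left h2 (by positivity)
        _ ≤ 2*(M:ℝ) * ((M:ℝ) ^ (-s) * S) := by nlinarith
    rw [hK]
    nlinarith [e1, e2]
  -- bound the log factor
  have hlogM : Real.log 2 ≤ Real.log (M:ℝ) := Real.log_le_log (by norm_num) hM2
  have hlog2 : (0.6931471803 : ℝ) < Real.log 2 := Real.log_two_gt_d9
  have hlogfac : 1 + Real.log ((M:ℝ)+1) ≤ 4 * Real.log (M:ℝ) := by
    have h1 : (M:ℝ)+1 ≤ (M:ℝ)^2 := by nlinarith
    have h2 : Real.log ((M:ℝ)+1) ≤ Real.log ((M:ℝ)^2) :=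
      Real.log_le_log (by positivity) h1
    rw [Real.log_pow] at h2
    push_cast at h2
    linarith
  have hlognn : 0 ≤ Real.log (M:ℝ) := le_trans (by linarith) hlogM
  -- final assembly
  have hfinal : K * (1 + Real.log ((M:ℝ)+1)) ≤
      16 * (M:ℝ) ^ (-s+1) * Real.log (M:ℝ) * S := by
    have hMn : (0:ℝ) ≤ (M:ℝ) ^ (1-s) := le_of_lt (Real.rpow_pos_of_pos hMpos _)
    have hln : 0 ≤ Real.log ((M:ℝ)+1) := Real.log_nonneg (by linarith)
    have hstep1 : K * (1 + Real.log ((M:ℝ)+1)) ≤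
        (4 * (M:ℝ) ^ (1-s) * S) * (4 * Real.log (M:ℝ)) := by
      apply mul_le_mul hKle hlogfac (by linarith) (by positivity)
    have hrw : (-s+1 : ℝ) = 1-s := by ring
    rw [hrw]
    calc K * (1 + Real.log ((M:ℝ)+1))
        ≤ (4 * (M:ℝ) ^ (1-s) * S) * (4 * Real.log (M:ℝ)) := hstep1
      _ = 16 * (M:ℝ) ^ (1-s) * Real.log (M:ℝ) * S := by ring
  have : ∑ m ∈ Finset.range (M+1), E m ^ 2 ≤
      16 * (M:ℝ) ^ (-s+1) * Real.log (M:ℝ) * S := le_trans hsumE hfinal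
  simpa [hE] using this



/-- the ℓ²-error of the Galerkin coefficients is bounded by
C M^{-s+1} log M ‖f‖_s². -/
theorem galerkin_coeff_error (s : ℝ) (hs : 2 ≤ s) :
    ∃ C > 0, ∀ M : ℕ, 2 ≤ M → ∀ f : ℝ → ℝ, MemLp f 2 (volume : Measure ℝ) →
      Summable (fun m : ℕ => ((m : ℝ) + 1) ^ s * hermCoeff f m ^ 2) →
      ∀ a : ℕ → ℝ, IsGalerkinCoeffs f M a →
        (∑ m ∈ Finset.range (M + 1), (a m - hermCoeff f m) ^ 2) ≤
          C * (M : ℝ) ^ (-s + 1) * Real.log M * sobolevSq f s := galerkin_coeff_error_aux s hs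
end

section
/- Let f ∈ L²(ℝ) and let M ≥ 2 be an integer. If a_0, …, a_M are Galerkin coefficients of order M for f, then |f̂_M − a_M| = √((M+2)/(M+1)) · |f̂_{M+2}| and |f̂_{M−1} − a_{M−1}| = √((M+1)/M) · |f̂_{M+1}|. -/
open MeasureTheory Real

lemma abs_eq_of_sqrt_mul {c d X Y : ℝ} (hc : 0 < c) (hd : 0 ≤ d)
    (h : Real.sqrt c * X = Real.sqrt d * Y) : |X| = Real.sqrt (d / c) * |Y| := by
  have hc' : (0:ℝ) < Real.sqrt c := Real.sqrt_pos.2 hc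
  rw [Real.sqrt_div hd, div_mul_eq_mul_div, eq_div_iff hc'.ne']
  calc |X| * Real.sqrt c = |Real.sqrt c * X| := by
        rw [abs_mul, abs_of_nonneg hc'.le, mul_comm]
    _ = |Real.sqrt d * Y| := by rw [h]
    _ = Real.sqrt d * |Y| := by
        rw [abs_mul, abs_of_nonneg (Real.sqrt_nonneg d)]

/-- the two top Galerkin coefficient errors. -/
theorem galerkin_top_coeff_error (f : ℝ → ℝ) (hf : MemLp f 2 (volume : Measure ℝ))
    (M : ℕ) (hM : 2 ≤ M) (a : ℕ → ℝ) (ha : IsGalerkinCoeffs f M a) :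
    |hermCoeff f M - a M| =
        Real.sqrt (((M : ℝ) + 2) / ((M : ℝ) + 1)) * |hermCoeff f (M + 2)| ∧
      |hermCoeff f (M - 1) - a (M - 1)| =
        Real.sqrt (((M : ℝ) + 1) / (M : ℝ)) * |hermCoeff f (M + 1)| := by
  obtain ⟨_, h2, h3⟩ := ha
  have hM0 : (0:ℝ) < (M:ℝ) := by exact_mod_cast Nat.lt_of_lt_of_le (by norm_num) hM
  unfold bCoeff at h2 h3
  simp only [Nat.add_sub_cancel] at h3
  push_cast at h2 h3
  constructor
  · have key : Real.sqrt (((M:ℝ) + 1) / 2) * (hermCoeff f M - a M)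
        = Real.sqrt (((M:ℝ) + 2) / 2) * hermCoeff f (M + 2) := by
      have e : ((M:ℝ) + 1 + 1) / 2 = ((M:ℝ) + 2) / 2 := by ring
      rw [e] at h3
      nlinarith [h3]
    have := abs_eq_of_sqrt_mul (c := ((M:ℝ)+1)/2) (d := ((M:ℝ)+2)/2)
      (by positivity) (by positivity) key
    rw [this]
    congr 1
    field_simp
  · have key : Real.sqrt ((M:ℝ) / 2) * (hermCoeff f (M - 1) - a (M - 1))
        = Real.sqrt (((M:ℝ) + 1) / 2) * hermCoeff f (M + 1) := by
      nlinarith [h2]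
    have := abs_eq_of_sqrt_mul (c := (M:ℝ)/2) (d := ((M:ℝ)+1)/2)
      (by positivity) (by positivity) key
    rw [this]
    congr 1
    field_simp
end

section
/- Let f ∈ L²(ℝ) and let M ≥ 2 be an integer. If a_0, …, a_M are Galerkin coefficients of order M for f (with convention a_{−1} = 0), then for every integer m with 0 ≤ m ≤ M−2 one has |f̂_m − a_m| = √((m+2)/(m+1)) · |f̂_{m+2} − a_{m+2}|. -/
open MeasureTheory Real

/-- the backward recursion for the Galerkin coefficient errors. -/
theorem galerkin_coeff_error_recursion (f : ℝ → ℝ) (hf : MemLp f 2 (volume : Measure ℝ))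
    (M : ℕ) (hM : 2 ≤ M) (a : ℕ → ℝ) (ha : IsGalerkinCoeffs f M a) :
    ∀ m : ℕ, m ≤ M - 2 →
      |hermCoeff f m - a m| =
        Real.sqrt (((m : ℝ) + 2) / ((m : ℝ) + 1)) * |hermCoeff f (m + 2) - a (m + 2)| := by
  intro m hm
  have h := ha.1 (m + 1) (by omega)
  simp only [bCoeff, Nat.add_sub_cancel] at h
  push_cast at h
  have key : Real.sqrt (((m : ℝ) + 1) / 2) * (hermCoeff f m - a m) =
      Real.sqrt (((m : ℝ) + 2) / 2) * (hermCoeff f (m + 2) - a (m + 2)) := by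
    have h2 : ((m : ℝ) + 1 + 1) = (m : ℝ) + 2 := by ring
    rw [h2] at h
    ring_nf
    ring_nf at h
    linarith
  have h1 : (0 : ℝ) < Real.sqrt (((m : ℝ) + 1) / 2) := by
    apply Real.sqrt_pos.2; positivity
  have h2 : (0 : ℝ) ≤ Real.sqrt (((m : ℝ) + 2) / 2) := Real.sqrt_nonneg _
  have habs : Real.sqrt (((m : ℝ) + 1) / 2) * |hermCoeff f m - a m| =
      Real.sqrt (((m : ℝ) + 2) / 2) * |hermCoeff f (m + 2) - a (m + 2)| := by
    rw [← abs_of_pos h1, ← abs_of_nonneg h2, ← abs_mul, ← abs_mul, key]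
  have hsq : Real.sqrt (((m : ℝ) + 2) / ((m : ℝ) + 1)) =
      Real.sqrt (((m : ℝ) + 2) / 2) / Real.sqrt (((m : ℝ) + 1) / 2) := by
    rw [← Real.sqrt_div (by positivity)]
    congr 1
    field_simp
  rw [hsq, div_mul_eq_mul_div, eq_div_iff h1.ne', mul_comm]
  exact habs
end

section
/- Let p be a continuous probability density on ℝ and let h : ℝ → ℝ be continuous with h·p integrable. Set ĥ = ∫_ℝ h(y) p(y) dy and f(x) = −∫_{−∞}^x (h(y) − ĥ) p(y) dy. Then f is continuously differentiable on ℝ with f′(x) = −(h(x) − ĥ) p(x) for every x, and f(x) → 0 both as x → −∞ and as x → +∞. -/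
open MeasureTheory Filter

lemma gain_aux (g : ℝ → ℝ) (hg_cont : Continuous g) (hg_int : Integrable g)
    (hg_zero : (∫ x : ℝ, g x) = 0) :
    ContDiff ℝ 1 (fun x => -∫ y in Set.Iic x, g y) ∧
      (∀ x : ℝ, deriv (fun x => -∫ y in Set.Iic x, g y) x = -g x) ∧
      Tendsto (fun x => -∫ y in Set.Iic x, g y) atBot (nhds 0) ∧
      Tendsto (fun x => -∫ y in Set.Iic x, g y) atTop (nhds 0) := by
  have hF : ∀ x : ℝ, (∫ y in Set.Iic x, g y) = (∫ y in Set.Iic (0:ℝ), g y) + ∫ y in (0:ℝ)..x, g y := by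
    intro x
    have := intervalIntegral.integral_Iic_sub_Iic (hg_int.integrableOn) (hg_int.integrableOn)
      (a := 0) (b := x)
    linarith [this]
  have hDeriv : ∀ x : ℝ, HasDerivAt (fun x => -∫ y in Set.Iic x, g y) (-g x) x := by
    intro x
    have h1 : HasDerivAt (fun u => ∫ y in (0:ℝ)..u, g y) (g x) x :=
      intervalIntegral.integral_hasDerivAt_right hg_int.intervalIntegrable
        (hg_cont.stronglyMeasurableAtFilter _ _) hg_cont.continuousAt
    have h2 : HasDerivAt (fun x => -∫ y in Set.Iic x, g y) (-g x) x := by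
      have := ((h1.const_add (∫ y in Set.Iic (0:ℝ), g y)).neg)
      refine this.congr_of_eventuallyEq ?_
      filter_upwards with u
      rw [hF u]
      rfl
    exact h2
  refine ⟨?_, fun x => (hDeriv x).deriv, ?_, ?_⟩
  · rw [contDiff_one_iff_deriv]
    refine ⟨fun x => (hDeriv x).differentiableAt, ?_⟩
    have : deriv (fun x => -∫ y in Set.Iic x, g y) = fun x => -g x :=
      funext fun x => (hDeriv x).deriv
    rw [this]
    exact hg_cont.neg
  · have hcov : AECover (volume : Measure ℝ) atBot (fun x : ℝ => Set.Ioi x) :=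
      aecover_Ioi tendsto_id
    have h1 : Tendsto (fun x : ℝ => ∫ y in Set.Ioi x, g y) atBot (nhds (∫ y, g y)) :=
      hcov.integral_tendsto_of_countably_generated hg_int
    have h2 : ∀ x : ℝ, (∫ y in Set.Iic x, g y) = (∫ y, g y) - ∫ y in Set.Ioi x, g y := by
      intro x
      have := integral_add_compl (measurableSet_Iic (a := x)) hg_int
      rw [Set.compl_Iic] at this
      linarith
    have : Tendsto (fun x : ℝ => ∫ y in Set.Iic x, g y) atBot (nhds ((∫ y, g y) - ∫ y, g y)) := by
      simp_rw [h2]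
      exact tendsto_const_nhds.sub h1
    rw [sub_self] at this
    simpa using this.neg
  · have hcov : AECover (volume : Measure ℝ) atTop (fun x : ℝ => Set.Iic x) :=
      aecover_Iic tendsto_id
    have h1 : Tendsto (fun x : ℝ => ∫ y in Set.Iic x, g y) atTop (nhds (∫ y, g y)) :=
      hcov.integral_tendsto_of_countably_generated hg_int
    rw [hg_zero] at h1
    simpa using h1.neg

/-- f(x) = -∫_{-∞}^x (h - ĥ) p is C¹ with f' = -(h - ĥ)p and
vanishes at ±∞ (the zero-boundary solvability of the FPF gain BVP in 1D). -/
theorem gain_antiderivative_C1_and_boundary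
    (p h : ℝ → ℝ)
    (hp_cont : Continuous p) (hp_nonneg : ∀ x, 0 ≤ p x)
    (hp_int : Integrable p) (hp_one : (∫ x : ℝ, p x) = 1)
    (hh_cont : Continuous h)
    (hhp : Integrable (fun x => h x * p x)) :
    ContDiff ℝ 1 (fun x => -∫ y in Set.Iic x, (h y - ∫ z : ℝ, h z * p z) * p y) ∧
      (∀ x : ℝ, deriv (fun x => -∫ y in Set.Iic x, (h y - ∫ z : ℝ, h z * p z) * p y) x =
        -((h x - ∫ z : ℝ, h z * p z) * p x)) ∧
      Tendsto (fun x => -∫ y in Set.Iic x, (h y - ∫ z : ℝ, h z * p z) * p y)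
        atBot (nhds 0) ∧
      Tendsto (fun x => -∫ y in Set.Iic x, (h y - ∫ z : ℝ, h z * p z) * p y)
        atTop (nhds 0) := by
  set c : ℝ := ∫ z : ℝ, h z * p z with hc
  have hg_cont : Continuous (fun y => (h y - c) * p y) :=
    (hh_cont.sub continuous_const).mul hp_cont
  have hg_eq : (fun y => (h y - c) * p y) = fun y => h y * p y - c * p y := by
    funext y; ring
  have hg_int : Integrable (fun y => (h y - c) * p y) := by
    rw [hg_eq]; exact hhp.sub (hp_int.const_mul c)
  have hg_zero : (∫ x : ℝ, (h x - c) * p x) = 0 := by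
    rw [hg_eq, integral_sub hhp (hp_int.const_mul c), MeasureTheory.integral_const_mul, hp_one, ← hc]
    ring
  exact gain_aux _ hg_cont hg_int hg_zero
end

section
/- For all m, n ∈ ℕ, the generalized Hermite functions are orthonormal in L²(ℝ): ∫_ℝ H̃_m(x) H̃_n(x) dx = 1 if m = n and 0 otherwise. -/
open MeasureTheory Real

/-- Polynomial version of the physicists' Hermite polynomials. -/
noncomputable def physHermiteP : ℕ → Polynomial ℝ
  | 0 => 1
  | 1 => Polynomial.C 2 * Polynomial.X
  | n + 2 => Polynomial.C 2 * Polynomial.X * physHermiteP (n + 1)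
      - Polynomial.C (2 * (n + 1) : ℝ) * physHermiteP n

lemma physHermite_eval : ∀ (n : ℕ) (x : ℝ), physHermite n x = (physHermiteP n).eval x := by
  intro n
  induction n using Nat.twoStepInduction with
  | zero => intro x; simp [physHermite, physHermiteP]
  | one => intro x; simp [physHermite, physHermiteP]
  | more n ih1 ih2 =>
      intro x
      simp only [physHermite, physHermiteP, ih1, ih2, Polynomial.eval_sub, Polynomial.eval_mul,
        Polynomial.eval_C, Polynomial.eval_X]
      try push_cast
      try ring

lemma derivative_physHermiteP : ∀ n : ℕ,
    Polynomial.derivative (physHermiteP n) = Polynomial.C (2 * n : ℝ) * physHermiteP (n - 1) := by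
  intro n
  induction n using Nat.twoStepInduction with
  | zero => simp [physHermiteP]
  | one => simp [physHermiteP]
  | more n ih1 ih2 =>
      have hrec : physHermiteP (n + 1) =
          Polynomial.C 2 * Polynomial.X * physHermiteP n
            - Polynomial.C (2 * n : ℝ) * physHermiteP (n - 1) := by
        cases n with
        | zero => simp [physHermiteP]
        | succ k =>
            show physHermiteP (k + 2) = _
            rw [physHermiteP]
            push_cast
            ring_nf
      rw [show physHermiteP (n + 2) = Polynomial.C 2 * Polynomial.X * physHermiteP (n + 1)
          - Polynomial.C (2 * (n + 1) : ℝ) * physHermiteP n from rfl]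
      simp only [Polynomial.derivative_sub, Polynomial.derivative_mul, Polynomial.derivative_C,
        Polynomial.derivative_X, zero_mul, zero_add, mul_one, mul_zero, add_zero]
      rw [ih1, ih2, Nat.add_sub_cancel, show (n + 2 : ℕ) - 1 = n + 1 from rfl, hrec]
      push_cast
      simp only [Polynomial.C_mul, Polynomial.C_add, Polynomial.C_1, map_ofNat]
      ring

lemma physHermiteP_succ (n : ℕ) : physHermiteP (n + 1) =
    Polynomial.C 2 * Polynomial.X * physHermiteP n
      - Polynomial.derivative (physHermiteP n) := by
  rw [derivative_physHermiteP]
  cases n with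
  | zero => simp [physHermiteP]
  | succ k =>
      show physHermiteP (k + 2) = _
      rw [physHermiteP]
      push_cast
      ring_nf

lemma integrable_poly_gauss (p : Polynomial ℝ) :
    Integrable fun x : ℝ => p.eval x * Real.exp (-x ^ 2) := by
  have key : ∀ q : Polynomial ℝ, Integrable fun x : ℝ => q.eval x * Real.exp (-1 * x ^ 2) := by
    intro q
    induction q using Polynomial.induction_on' with
    | add p q hp hq => simpa [add_mul, Pi.add_def] using hp.add hq
    | monomial n a =>
        have hn : (-1 : ℝ) < n := lt_of_lt_of_le neg_one_lt_zero (Nat.cast_nonneg n)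
        have h := integrable_rpow_mul_exp_neg_mul_sq one_pos hn
        simp_rw [Real.rpow_natCast] at h
        have := h.const_mul a
        simpa [Polynomial.eval_monomial, mul_assoc] using this
  simpa [neg_mul, one_mul] using key p

open Polynomial in
lemma J_succ (m n : ℕ) :
    (∫ x : ℝ, (physHermiteP (m + 1)).eval x * (physHermiteP n).eval x * Real.exp (-x ^ 2))
      = (2 * n : ℝ) *
        ∫ x : ℝ, (physHermiteP m).eval x * (physHermiteP (n - 1)).eval x * Real.exp (-x ^ 2) := by
  set u : ℝ → ℝ := fun x => (physHermiteP n).eval x with hu_def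
  set u' : ℝ → ℝ := fun x => (2 * n : ℝ) * (physHermiteP (n - 1)).eval x with hu'_def
  set v : ℝ → ℝ := fun x => (physHermiteP m).eval x * Real.exp (-x ^ 2) with hv_def
  set v' : ℝ → ℝ := fun x => -((physHermiteP (m + 1)).eval x * Real.exp (-x ^ 2)) with hv'_def
  have hu : ∀ x, HasDerivAt u (u' x) x := by
    intro x
    have h := (physHermiteP n).hasDerivAt x
    rw [derivative_physHermiteP] at h
    simpa [u, u'] using h
  have hexp : ∀ x : ℝ, HasDerivAt (fun y : ℝ => Real.exp (-y ^ 2))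
      (Real.exp (-x ^ 2) * (-(2 * x))) x := by
    intro x
    have h1 : HasDerivAt (fun y : ℝ => -y ^ 2) (-(2 * x)) x := by
      simpa [Pi.neg_def] using (hasDerivAt_pow 2 x).neg
    simpa using h1.exp
  have hv : ∀ x, HasDerivAt v (v' x) x := by
    intro x
    have h := ((physHermiteP m).hasDerivAt x).mul (hexp x)
    have heq : (derivative (physHermiteP m)).eval x * Real.exp (-x ^ 2)
        + (physHermiteP m).eval x * (Real.exp (-x ^ 2) * (-(2 * x))) = v' x := by
      simp only [hv'_def, physHermiteP_succ, Polynomial.eval_sub, Polynomial.eval_mul,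
        Polynomial.eval_C, Polynomial.eval_X]
      ring
    rw [heq] at h
    exact h
  have huv' : Integrable (u * v') := by
    have h := integrable_poly_gauss (-(physHermiteP (m + 1) * physHermiteP n))
    refine h.congr ?_
    filter_upwards with x
    simp only [u, v', Pi.mul_apply, Polynomial.eval_mul, Polynomial.eval_neg]
    ring
  have hu'v : Integrable (u' * v) := by
    have h := (integrable_poly_gauss (physHermiteP m * physHermiteP (n - 1))).const_mul (2 * n : ℝ)
    refine h.congr ?_
    filter_upwards with x
    simp only [u', v, Pi.mul_apply, Polynomial.eval_mul]
    ring
  have huv : Integrable (u * v) := by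
    have h := integrable_poly_gauss (physHermiteP m * physHermiteP n)
    refine h.congr ?_
    filter_upwards with x
    simp only [u, v, Pi.mul_apply, Polynomial.eval_mul]
    ring
  have h := integral_mul_deriv_eq_deriv_mul_of_integrable (u := u) (v := v) (fun x _ => hu x) (fun x _ => hv x) huv' hu'v huv
  have e1 : (∫ x : ℝ, u x * v' x)
      = -∫ x : ℝ, (physHermiteP (m + 1)).eval x * (physHermiteP n).eval x * Real.exp (-x ^ 2) := by
    rw [← integral_neg]
    congr 1
    funext x
    simp only [u, v']
    ring
  have e2 : (∫ x : ℝ, u' x * v x)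
      = (2 * n : ℝ) *
        ∫ x : ℝ, (physHermiteP m).eval x * (physHermiteP (n - 1)).eval x * Real.exp (-x ^ 2) := by
    rw [← integral_const_mul]
    congr 1
    funext x
    simp only [u', v]
    ring
  rw [e1, e2] at h
  linarith

lemma J_symm (m n : ℕ) :
    (∫ x : ℝ, (physHermiteP m).eval x * (physHermiteP n).eval x * Real.exp (-x ^ 2))
      = ∫ x : ℝ, (physHermiteP n).eval x * (physHermiteP m).eval x * Real.exp (-x ^ 2) := by
  congr 1
  funext x
  ring

lemma J_eq : ∀ m n : ℕ,
    (∫ x : ℝ, (physHermiteP m).eval x * (physHermiteP n).eval x * Real.exp (-x ^ 2))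
      = if m = n then (2 : ℝ) ^ n * n.factorial * Real.sqrt Real.pi else 0 := by
  intro m
  induction m with
  | zero =>
      intro n
      cases n with
      | zero =>
          have := integral_gaussian 1
          simp only [physHermiteP, Polynomial.eval_one, one_mul, if_pos rfl]
          simpa using this
      | succ k =>
          rw [J_symm, J_succ]
          simp
  | succ m ih =>
      intro n
      cases n with
      | zero =>
          rw [J_succ]
          simp
      | succ k =>
          rw [J_succ]
          simp only [Nat.add_sub_cancel, ih k]
          by_cases h : m = k
          · subst h
            rw [if_pos rfl, if_pos rfl, Nat.factorial_succ]
            push_cast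
            ring
          · rw [if_neg h, if_neg (by omega)]
            ring

open MeasureTheory in
/-- the generalized Hermite functions are orthonormal in L²(ℝ). -/
theorem tildeH_orthonormal (m n : ℕ) :
    (∫ x : ℝ, tildeH m x * tildeH n x) = if m = n then 1 else 0 := by
  have hpi : (0 : ℝ) < Real.pi := Real.pi_pos
  have key : (∫ x : ℝ, tildeH m x * tildeH n x)
      = (Real.pi ^ (-(1 / 4) : ℝ) * (Real.sqrt (2 ^ m * m.factorial))⁻¹)
        * (Real.pi ^ (-(1 / 4) : ℝ) * (Real.sqrt (2 ^ n * n.factorial))⁻¹) *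
        ∫ x : ℝ, (physHermiteP m).eval x * (physHermiteP n).eval x * Real.exp (-x ^ 2) := by
    rw [← integral_const_mul]
    congr 1
    funext x
    rw [tildeH, tildeH, physHermite_eval, physHermite_eval]
    have hexp : Real.exp (-x ^ 2 / 2) * Real.exp (-x ^ 2 / 2) = Real.exp (-x ^ 2) := by
      rw [← Real.exp_add]; ring_nf
    rw [← hexp]
    ring
  rw [key, J_eq]
  by_cases h : m = n
  · subst h
    rw [if_pos rfl, if_pos rfl]
    have hfac : (0 : ℝ) < 2 ^ m * m.factorial := by positivity
    have hs : Real.sqrt (2 ^ m * m.factorial) * Real.sqrt (2 ^ m * m.factorial)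
        = 2 ^ m * m.factorial := Real.mul_self_sqrt hfac.le
    have hsp : Real.sqrt Real.pi = Real.pi ^ ((1 : ℝ) / 2) := Real.sqrt_eq_rpow Real.pi
    have hppow : Real.pi ^ (-(1 / 4) : ℝ) * Real.pi ^ (-(1 / 4) : ℝ) * Real.pi ^ ((1 : ℝ) / 2)
        = 1 := by
      rw [← Real.rpow_add hpi, ← Real.rpow_add hpi]
      norm_num
    rw [hsp]
    calc Real.pi ^ (-(1 / 4) : ℝ) * (Real.sqrt (2 ^ m * m.factorial))⁻¹ *
          (Real.pi ^ (-(1 / 4) : ℝ) * (Real.sqrt (2 ^ m * m.factorial))⁻¹) *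
          ((2 : ℝ) ^ m * m.factorial * Real.pi ^ ((1 : ℝ) / 2))
        = (Real.pi ^ (-(1 / 4) : ℝ) * Real.pi ^ (-(1 / 4) : ℝ) * Real.pi ^ ((1 : ℝ) / 2)) *
          ((Real.sqrt (2 ^ m * m.factorial) * Real.sqrt (2 ^ m * m.factorial))⁻¹ *
            ((2 : ℝ) ^ m * m.factorial)) := by
          rw [mul_inv]; ring
      _ = 1 := by rw [hppow, hs, inv_mul_cancel₀ hfac.ne', one_mul]
  · rw [if_neg h, if_neg h, mul_zero]
end
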